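/- Let S,T,F be pairwise commuting homeomorphisms of ℝ² (S,T the unit translations), let L ∈ SL(3,ℤ), and define U,V,G from the entries of L⁻¹ as U = S^{a₁}T^{b₁}F^{-c₁}, V = S^{a₂}T^{b₂}F^{-c₂}, G = S^{-a₃}T^{-b₃}F^{c₃}. Suppose the rotation set ρ_{S,T}(F) is disjoint from the affine line Φ L⁻¹(Δ_∞). Then ρ_{U,V}(G) = 𝐿̂(ρ_{S,T}(F)), where 𝐿̂ = Φ ∘ L ∘ Φ⁻¹ is the projective transformation restricted to the affine chart. -/

import Mathlib

open Filter Topology Pointwise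

noncomputable section

/-- Natural iterates of a homeomorphism. -/
def hnpow {X : Type*} [TopologicalSpace X] (F : X ≃ₜ X) : ℕ → X ≃ₜ X
  | 0 => Homeomorph.refl X
  | n + 1 => (hnpow F n).trans F

/-- Integer iterates of a homeomorphism. -/
def hzpow {X : Type*} [TopologicalSpace X] (F : X ≃ₜ X) : ℤ → X ≃ₜ X
  | Int.ofNat n => hnpow F n
  | Int.negSucc n => hnpow F.symm (n + 1)

/-- `act U V G m n p = U^{-m} ∘ V^{-n} ∘ G^{p}`. -/
def act {X : Type*} [TopologicalSpace X] (U V G : X ≃ₜ X) (m n p : ℤ) : X ≃ₜ X :=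
  ((hzpow G p).trans (hzpow V (-n))).trans (hzpow U (-m))

/-- A sequence in `ℤ³` tends to infinity. -/
def tendsInfty (s : ℕ → ℤ × ℤ × ℤ) : Prop :=
  Tendsto (fun k => |(s k).1| + |(s k).2.1| + |(s k).2.2|) atTop atTop

/-- The rotation set of `G` with respect to `U` and `V`, defined via compact sets:
`w` belongs to it iff there are a compact `K` and `(m_k, n_k, p_k) ∈ ℤ³` tending to infinity
with `U^{-m_k} V^{-n_k} G^{p_k}(K) ∩ K ≠ ∅` and `(m_k/p_k, n_k/p_k) → w`. -/
def rotSet {X : Type*} [TopologicalSpace X] (G U V : X ≃ₜ X) : Set (ℝ × ℝ) :=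
  {w | ∃ K : Set X, IsCompact K ∧ ∃ s : ℕ → ℤ × ℤ × ℤ,
    (∀ k, ((act U V G (s k).1 (s k).2.1 (s k).2.2) '' K ∩ K).Nonempty) ∧
    tendsInfty s ∧
    Tendsto (fun k => ((((s k).1 : ℝ) / ((s k).2.2 : ℝ), ((s k).2.1 : ℝ) / ((s k).2.2 : ℝ)) : ℝ × ℝ))
      atTop (nhds w)}

/-- Two homeomorphisms commute. -/
def commuting {X : Type*} [TopologicalSpace X] (F G : X ≃ₜ X) : Prop := ∀ x, F (G x) = G (F x)

/-- The unit horizontal translation `S : (x,y) ↦ (x+1,y)`. -/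
def S2 : (ℝ × ℝ) ≃ₜ (ℝ × ℝ) := Homeomorph.addRight ((1 : ℝ), (0 : ℝ))

/-- The unit vertical translation `T : (x,y) ↦ (x,y+1)`. -/
def T2 : (ℝ × ℝ) ≃ₜ (ℝ × ℝ) := Homeomorph.addRight ((0 : ℝ), (1 : ℝ))

/-- The displacement set `D(H) = {H(z) - z : z ∈ ℝ²}`. -/
def disp (H : (ℝ × ℝ) ≃ₜ (ℝ × ℝ)) : Set (ℝ × ℝ) := Set.range fun z => H z - z

/-- `mk2 F a b c = S^a ∘ T^b ∘ F^{-c}`. -/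
def mk2 (F : (ℝ × ℝ) ≃ₜ (ℝ × ℝ)) (a b c : ℤ) : (ℝ × ℝ) ≃ₜ (ℝ × ℝ) :=
  ((hzpow F (-c)).trans (hzpow T2 b)).trans (hzpow S2 a)

/-- The projective action of an integer 3×3 matrix in the affine chart. -/
def lhatZ (L : Matrix (Fin 3) (Fin 3) ℤ) (p : ℝ × ℝ) : ℝ × ℝ :=
  (((L 0 0 : ℝ) * p.1 + (L 0 1 : ℝ) * p.2 + (L 0 2 : ℝ)) /
      ((L 2 0 : ℝ) * p.1 + (L 2 1 : ℝ) * p.2 + (L 2 2 : ℝ)),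
   ((L 1 0 : ℝ) * p.1 + (L 1 1 : ℝ) * p.2 + (L 1 2 : ℝ)) /
      ((L 2 0 : ℝ) * p.1 + (L 2 1 : ℝ) * p.2 + (L 2 2 : ℝ)))

/-- `ρ_{U,V}(G) = 𝐿̂(ρ_{S,T}(F))` when `ρ_{S,T}(F)` avoids `Φ L⁻¹(Δ_∞)`. -/
lemma hnpow_toEquiv {X : Type*} [TopologicalSpace X] (F : X ≃ₜ X) (n : ℕ) :
    (hnpow F n).toEquiv = F.toEquiv ^ n := by
  induction n with
  | zero => rfl
  | succ n ih =>
    show ((hnpow F n).trans F).toEquiv = _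
    rw [pow_succ']
    ext x
    simp [Equiv.Perm.mul_apply, ← ih]

lemma hzpow_toEquiv {X : Type*} [TopologicalSpace X] (F : X ≃ₜ X) (k : ℤ) :
    (hzpow F k).toEquiv = F.toEquiv ^ k := by
  cases k with
  | ofNat n =>
    show (hnpow F n).toEquiv = _
    rw [hnpow_toEquiv]
    norm_cast
  | negSucc n =>
    show (hnpow F.symm (n+1)).toEquiv = _
    rw [hnpow_toEquiv, zpow_negSucc, ← inv_pow]
    rfl

lemma hzpow_apply {X : Type*} [TopologicalSpace X] (F : X ≃ₜ X) (k : ℤ) (x : X) :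
    hzpow F k x = (F.toEquiv ^ k) x := by
  rw [← hzpow_toEquiv]; rfl

lemma act_toEquiv {X : Type*} [TopologicalSpace X] (U V G : X ≃ₜ X) (m n p : ℤ) :
    (act U V G m n p).toEquiv = U.toEquiv ^ (-m) * (V.toEquiv ^ (-n) * G.toEquiv ^ p) := by
  ext x
  show (((hzpow G p).trans (hzpow V (-n))).trans (hzpow U (-m))) x = _
  simp [Homeomorph.trans_apply, Equiv.Perm.mul_apply, hzpow_apply]

lemma prod_zpow {G : Type*} [Group G] {s t f : G} (hst : Commute s t) (hsf : Commute s f)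
    (htf : Commute t f) (x y z k : ℤ) :
    (s ^ x * (t ^ y * f ^ z)) ^ k = s ^ (x * k) * (t ^ (y * k) * f ^ (z * k)) := by
  have h1 : Commute (s ^ x) (t ^ y * f ^ z) :=
    ((hst.zpow_zpow x y).mul_right (hsf.zpow_zpow x z))
  have h2 : Commute (t ^ y) (f ^ z) := htf.zpow_zpow y z
  rw [h1.mul_zpow, h2.mul_zpow, ← zpow_mul, ← zpow_mul, ← zpow_mul]

lemma prod_mul {G : Type*} [Group G] {s t f : G} (hst : Commute s t) (hsf : Commute s f)
    (htf : Commute t f) (x1 y1 z1 x2 y2 z2 : ℤ) :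
    (s ^ x1 * (t ^ y1 * f ^ z1)) * (s ^ x2 * (t ^ y2 * f ^ z2))
      = s ^ (x1 + x2) * (t ^ (y1 + y2) * f ^ (z1 + z2)) := by
  have c1 : Commute (t ^ y1 * f ^ z1) (s ^ x2) :=
    (((hst.zpow_zpow x2 y1).mul_right (hsf.zpow_zpow x2 z1))).symm
  have c2 : Commute (f ^ z1) (t ^ y2) := (htf.zpow_zpow y2 z1).symm
  rw [c1.mul_mul_mul_comm, c2.mul_mul_mul_comm, ← zpow_add, ← zpow_add, ← zpow_add]

lemma addRight_zpow_apply (v : ℝ × ℝ) (k : ℤ) : ∀ z : ℝ × ℝ,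
    ((Homeomorph.addRight v).toEquiv ^ k) z = z + k • v := by
  induction k using Int.induction_on with
  | zero => intro z; simp
  | succ n ih =>
    intro z
    rw [zpow_add_one, Equiv.Perm.mul_apply]
    have h0 : (Homeomorph.addRight v).toEquiv z = z + v := rfl
    rw [h0, ih (z + v), add_smul, one_smul]
    abel
  | pred n ih =>
    intro z
    rw [zpow_sub_one, Equiv.Perm.mul_apply]
    have h1 : ((Homeomorph.addRight v).toEquiv)⁻¹ z = z - v := rfl
    rw [h1, ih (z - v), sub_smul, one_smul]
    abel

lemma mk2_toEquiv (F : (ℝ × ℝ) ≃ₜ (ℝ × ℝ)) (a b c : ℤ) :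
    (mk2 F a b c).toEquiv = S2.toEquiv ^ a * (T2.toEquiv ^ b * F.toEquiv ^ (-c)) := by
  refine Equiv.ext fun x => ?_
  show (((hzpow F (-c)).trans (hzpow T2 b)).trans (hzpow S2 a)) x = _
  simp [Homeomorph.trans_apply, Equiv.Perm.mul_apply, hzpow_apply]

lemma S2_zpow_apply (k : ℤ) (z : ℝ × ℝ) : (S2.toEquiv ^ k) z = z + ((k : ℝ), 0) := by
  rw [show S2 = Homeomorph.addRight ((1:ℝ), (0:ℝ)) from rfl, addRight_zpow_apply]
  congr 1
  simp [Prod.ext_iff]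

lemma T2_zpow_apply (k : ℤ) (z : ℝ × ℝ) : (T2.toEquiv ^ k) z = z + (0, (k : ℝ)) := by
  rw [show T2 = Homeomorph.addRight ((0:ℝ), (1:ℝ)) from rfl, addRight_zpow_apply]
  congr 1
  simp [Prod.ext_iff]

lemma act_STF_apply (F : (ℝ × ℝ) ≃ₜ (ℝ × ℝ)) (a b c : ℤ) (z : ℝ × ℝ) :
    act S2 T2 F a b c z = (F.toEquiv ^ c) z - ((a : ℝ), (b : ℝ)) := by
  have h : act S2 T2 F a b c z = (S2.toEquiv ^ (-a)) ((T2.toEquiv ^ (-b)) ((F.toEquiv ^ c) z)) := by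
    have := act_toEquiv S2 T2 F a b c
    have h2 : act S2 T2 F a b c z = (act S2 T2 F a b c).toEquiv z := rfl
    rw [h2, this]
    simp [Equiv.Perm.mul_apply]
  rw [h, T2_zpow_apply, S2_zpow_apply]
  ext <;> simp <;> ring

lemma commute_toEquiv {F H : (ℝ × ℝ) ≃ₜ (ℝ × ℝ)} (h : commuting F H) :
    Commute F.toEquiv H.toEquiv := by
  refine Equiv.ext fun z => ?_
  simp only [Equiv.Perm.mul_apply]
  exact h z

lemma commute_S2T2 : Commute S2.toEquiv T2.toEquiv := by
  refine Equiv.ext fun z => ?_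
  simp only [Equiv.Perm.mul_apply]
  show ((z + ((0:ℝ),(1:ℝ))) + ((1:ℝ),(0:ℝ))) = ((z + ((1:ℝ),(0:ℝ))) + ((0:ℝ),(1:ℝ)))
  abel

lemma exists_disp_bound (F : (ℝ × ℝ) ≃ₜ (ℝ × ℝ)) (hS : commuting F S2) (hT : commuting F T2) :
    ∃ D : ℝ, 0 ≤ D ∧ ∀ (k : ℤ) (z : ℝ × ℝ), ‖(F.toEquiv ^ k) z - z‖ ≤ |(k : ℝ)| * D := by
  have hfs : Commute F.toEquiv S2.toEquiv := commute_toEquiv hS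
  have hft : Commute F.toEquiv T2.toEquiv := commute_toEquiv hT
  have per : ∀ (i j : ℤ) (z : ℝ × ℝ), F (z + ((i:ℝ), (j:ℝ))) = F z + ((i:ℝ), (j:ℝ)) := by
    intro i j z
    have hc : Commute F.toEquiv (S2.toEquiv ^ i * T2.toEquiv ^ j) :=
      (hfs.zpow_right i).mul_right (hft.zpow_right j)
    have happ := congrArg (fun e : Equiv.Perm (ℝ × ℝ) => e z) hc.eq
    simp only [Equiv.Perm.mul_apply, S2_zpow_apply, T2_zpow_apply] at happ
    have e1 : ∀ w : ℝ × ℝ, w + ((0:ℝ),(j:ℝ)) + ((i:ℝ),0) = w + ((i:ℝ),(j:ℝ)) := by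
      intro w; ext <;> simp
    rw [e1, e1] at happ
    simpa using happ
  obtain ⟨zmax, _, hzmax'⟩ := (isCompact_Icc (a := ((0:ℝ),(0:ℝ))) (b := ((1:ℝ),(1:ℝ)))).exists_isMaxOn
    ⟨((0:ℝ),(0:ℝ)), by constructor <;> constructor <;> norm_num⟩
    ((F.continuous.sub continuous_id).norm.continuousOn)
  have hzmax : ∀ y ∈ Set.Icc ((0:ℝ),(0:ℝ)) ((1:ℝ),(1:ℝ)), ‖F y - y‖ ≤ ‖F zmax - zmax‖ :=
    fun y hy => hzmax' hy
  set D0 : ℝ := ‖F zmax - zmax‖ with hD0def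
  have hD0 : 0 ≤ D0 := norm_nonneg _
  have disp_one : ∀ z : ℝ × ℝ, ‖F z - z‖ ≤ D0 := by
    intro z
    set w : ℝ × ℝ := (Int.fract z.1, Int.fract z.2) with hw
    have hful : w ∈ Set.Icc ((0:ℝ),(0:ℝ)) ((1:ℝ),(1:ℝ)) := by
      constructor <;> constructor <;>
        simp [hw, Int.fract_nonneg, (Int.fract_lt_one _).le]
    have hz : z = w + ((⌊z.1⌋ : ℝ), (⌊z.2⌋ : ℝ)) := by
      have hr : ∀ r : ℝ, r = Int.fract r + (⌊r⌋ : ℝ) := fun r => by rw [Int.fract]; ring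
      ext
      · exact hr z.1
      · exact hr z.2
    have hper := per ⌊z.1⌋ ⌊z.2⌋ w
    have h2 : F z - z = F w - w := by
      rw [hz, hper]; abel
    rw [h2]
    exact hzmax w hful
  have hnat : ∀ (n : ℕ) (z : ℝ × ℝ), ‖(F.toEquiv ^ n) z - z‖ ≤ (n:ℝ) * D0 := by
    intro n
    induction n with
    | zero => intro z; simp
    | succ n ih =>
      intro z
      rw [pow_succ', Equiv.Perm.mul_apply]
      set w := (F.toEquiv ^ n) z with hwdef
      have key : F.toEquiv w - z = (F w - w) + (w - z) := by
        show F w - z = (F w - w) + (w - z)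
        abel
      calc ‖F.toEquiv w - z‖ = ‖(F w - w) + (w - z)‖ := by rw [key]
        _ ≤ ‖F w - w‖ + ‖w - z‖ := norm_add_le _ _
        _ ≤ D0 + (n:ℝ) * D0 := add_le_add (disp_one w) (ih z)
        _ = ((n:ℕ)+1 : ℝ) * D0 := by ring
        _ = ((n+1 : ℕ) : ℝ) * D0 := by push_cast; ring
  refine ⟨D0, hD0, ?_⟩
  intro k z
  cases k with
  | ofNat n =>
    have hk : (F.toEquiv ^ (Int.ofNat n : ℤ)) = F.toEquiv ^ n := zpow_natCast _ n
    rw [hk]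
    have habs : |((Int.ofNat n : ℤ) : ℝ)| = (n:ℝ) := by
      simp
    rw [habs]
    exact hnat n z
  | negSucc n =>
    have hk : (F.toEquiv ^ (Int.negSucc n)) = (F.toEquiv ^ (n+1))⁻¹ := zpow_negSucc _ n
    set u := (F.toEquiv ^ (Int.negSucc n)) z with hu
    have hzu : (F.toEquiv ^ (n+1)) u = z := by
      rw [hu, hk]
      exact (F.toEquiv ^ (n+1)).apply_symm_apply z
    have habs : |((Int.negSucc n : ℤ) : ℝ)| = ((n:ℝ)+1) := by
      rw [Int.cast_negSucc]
      rw [abs_neg, abs_of_nonneg (by positivity)]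
      push_cast; ring
    calc ‖u - z‖ = ‖(F.toEquiv ^ (n+1)) u - u‖ := by rw [hzu, norm_sub_rev]
      _ ≤ ((n+1:ℕ):ℝ) * D0 := hnat (n+1) u
      _ = |((Int.negSucc n : ℤ) : ℝ)| * D0 := by rw [habs]; push_cast; ring

lemma inter_bound (F : (ℝ × ℝ) ≃ₜ (ℝ × ℝ)) (hS : commuting F S2) (hT : commuting F T2)
    (K : Set (ℝ × ℝ)) (hK : IsCompact K) :
    ∃ Dd C : ℝ, 0 ≤ Dd ∧ 0 ≤ C ∧ ∀ a b c : ℤ, ((act S2 T2 F a b c) '' K ∩ K).Nonempty →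
      (|(a:ℝ)| + |(b:ℝ)|) ≤ |(c:ℝ)| * Dd + C := by
  obtain ⟨D, hD, hDb⟩ := exists_disp_bound F hS hT
  obtain ⟨r, hr⟩ := hK.isBounded.subset_closedBall (0 : ℝ × ℝ)
  refine ⟨2*D, 4*(max r 0), by linarith, by positivity, ?_⟩
  rintro a b c ⟨y, ⟨x, hxK, hxy⟩, hyK⟩
  rw [act_STF_apply] at hxy
  have hx : ‖x‖ ≤ max r 0 := le_trans (mem_closedBall_zero_iff.1 (hr hxK)) (le_max_left _ _)
  have hy : ‖y‖ ≤ max r 0 := le_trans (mem_closedBall_zero_iff.1 (hr hyK)) (le_max_left _ _)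
  have hvec : ((a:ℝ),(b:ℝ)) = ((F.toEquiv ^ c) x - x) + (x - y) := by rw [← hxy]; abel
  have hnorm : ‖((a:ℝ),(b:ℝ))‖ ≤ |(c:ℝ)| * D + 2 * max r 0 := by
    rw [hvec]
    calc ‖((F.toEquiv ^ c) x - x) + (x - y)‖ ≤ ‖(F.toEquiv ^ c) x - x‖ + ‖x - y‖ := norm_add_le _ _
      _ ≤ |(c:ℝ)| * D + (‖x‖ + ‖y‖) := add_le_add (hDb c x) (norm_sub_le _ _)
      _ ≤ |(c:ℝ)| * D + 2 * max r 0 := by linarith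
  have ha : |(a:ℝ)| ≤ ‖((a:ℝ),(b:ℝ))‖ := by
    rw [← Real.norm_eq_abs]
    exact norm_fst_le ((a:ℝ),(b:ℝ))
  have hb : |(b:ℝ)| ≤ ‖((a:ℝ),(b:ℝ))‖ := by
    rw [← Real.norm_eq_abs]
    exact norm_snd_le ((a:ℝ),(b:ℝ))
  linarith

lemma tendsto_int_of_mul (c : ℤ) (hc : 0 < c) (g : ℕ → ℤ)
    (h : Tendsto (fun k => c * g k) atTop atTop) : Tendsto g atTop atTop := by
  rw [tendsto_atTop] at h ⊢
  intro b
  filter_upwards [h (c * b)] with k hk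
  exact le_of_mul_le_mul_left hk hc

lemma tendsto_real_aux (f g : ℕ → ℝ) (A B : ℝ) (hA : 0 ≤ A) (hg : ∀ k, 0 ≤ g k)
    (hf : Tendsto f atTop atTop) (hle : ∀ k, f k ≤ A * g k + B) :
    Tendsto g atTop atTop := by
  have h1 : Tendsto (fun k => (f k + -B) / (A + 1)) atTop atTop :=
    (tendsto_atTop_add_const_right _ (-B) hf).atTop_div_const (by linarith)
  apply tendsto_atTop_mono _ h1
  intro k
  rw [div_le_iff₀ (by linarith : (0:ℝ) < A + 1)]
  nlinarith [hle k, hg k]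

def row3 (N : Matrix (Fin 3) (Fin 3) ℤ) (v : ℤ × ℤ × ℤ) : ℤ × ℤ × ℤ :=
  (N 0 0 * v.1 + N 0 1 * v.2.1 + N 0 2 * v.2.2,
   N 1 0 * v.1 + N 1 1 * v.2.1 + N 1 2 * v.2.2,
   N 2 0 * v.1 + N 2 1 * v.2.1 + N 2 2 * v.2.2)

def sabs (v : ℤ × ℤ × ℤ) : ℤ := |v.1| + |v.2.1| + |v.2.2|

lemma row3_bound (N : Matrix (Fin 3) (Fin 3) ℤ) :
    ∃ cN : ℤ, 0 < cN ∧ ∀ v, sabs (row3 N v) ≤ cN * sabs v := by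
  have key : ∀ x y z m n p : ℤ, |x * m + y * n + z * p| ≤ (|x| + |y| + |z|) * (|m| + |n| + |p|) := by
    intro x y z m n p
    calc |x*m + y*n + z*p| ≤ |x*m| + |y*n| + |z*p| := abs_add_three _ _ _
      _ = |x| * |m| + |y| * |n| + |z| * |p| := by rw [abs_mul, abs_mul, abs_mul]
      _ ≤ (|x| + |y| + |z|) * (|m| + |n| + |p|) := by
          nlinarith [abs_nonneg x, abs_nonneg y, abs_nonneg z, abs_nonneg m, abs_nonneg n, abs_nonneg p]
  refine ⟨(|N 0 0| + |N 0 1| + |N 0 2|) + (|N 1 0| + |N 1 1| + |N 1 2|)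
      + (|N 2 0| + |N 2 1| + |N 2 2|) + 1, by positivity, ?_⟩
  rintro ⟨m, n, p⟩
  have h0 := key (N 0 0) (N 0 1) (N 0 2) m n p
  have h1 := key (N 1 0) (N 1 1) (N 1 2) m n p
  have h2 := key (N 2 0) (N 2 1) (N 2 2) m n p
  have hS : (0:ℤ) ≤ |m| + |n| + |p| := by positivity
  simp only [sabs, row3]
  nlinarith [hS]

lemma ratio_lemma (L : Matrix (Fin 3) (Fin 3) ℤ) (a b c : ℕ → ℤ) (w : ℝ × ℝ)
    (hw : Tendsto (fun k => (((a k : ℝ)) / ((c k : ℝ)), ((b k : ℝ)) / ((c k : ℝ)))) atTop (nhds w))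
    (hc : Tendsto (fun k => |((c k : ℝ))|) atTop atTop)
    (hden : (L 2 0 : ℝ) * w.1 + (L 2 1 : ℝ) * w.2 + (L 2 2 : ℝ) ≠ 0) :
    Tendsto (fun k =>
      (((L 0 0 * a k + L 0 1 * b k + L 0 2 * c k : ℤ) : ℝ)
          / ((L 2 0 * a k + L 2 1 * b k + L 2 2 * c k : ℤ) : ℝ),
       ((L 1 0 * a k + L 1 1 * b k + L 1 2 * c k : ℤ) : ℝ)
          / ((L 2 0 * a k + L 2 1 * b k + L 2 2 * c k : ℤ) : ℝ)))
      atTop (nhds (lhatZ L w)) := by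
  have hw1 : Tendsto (fun k => (a k : ℝ) / (c k : ℝ)) atTop (nhds w.1) :=
    (continuous_fst.tendsto w).comp hw
  have hw2 : Tendsto (fun k => (b k : ℝ) / (c k : ℝ)) atTop (nhds w.2) :=
    (continuous_snd.tendsto w).comp hw
  set Nf : Fin 3 → ℕ → ℝ := fun i k =>
    (L i 0 : ℝ) * ((a k:ℝ)/(c k:ℝ)) + (L i 1 : ℝ) * ((b k:ℝ)/(c k:ℝ)) + (L i 2 : ℝ) with hNf
  have hN : ∀ i : Fin 3, Tendsto (Nf i) atTop
      (nhds ((L i 0:ℝ) * w.1 + (L i 1:ℝ) * w.2 + (L i 2:ℝ))) := by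
    intro i
    exact ((hw1.const_mul _).add (hw2.const_mul _)).add tendsto_const_nhds
  have hcne : ∀ᶠ k in atTop, (c k : ℝ) ≠ 0 := by
    filter_upwards [hc.eventually_ge_atTop 1] with k hk
    intro h0
    rw [h0] at hk
    norm_num at hk
  have cast_eq : ∀ i : Fin 3, ∀ k, (c k:ℝ) ≠ 0 →
      ((L i 0 * a k + L i 1 * b k + L i 2 * c k : ℤ):ℝ) = Nf i k * (c k : ℝ) := by
    intro i k hk
    simp only [hNf]
    push_cast
    field_simp
  have hkey : ∀ i : Fin 3, ∀ k, (c k : ℝ) ≠ 0 →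
      ((L i 0 * a k + L i 1 * b k + L i 2 * c k : ℤ) : ℝ)
        / ((L 2 0 * a k + L 2 1 * b k + L 2 2 * c k : ℤ) : ℝ) = Nf i k / Nf 2 k := by
    intro i k hk
    rw [cast_eq i k hk, cast_eq 2 k hk, mul_div_mul_right _ _ hk]
  have hlim1 := (hN 0).div (hN 2) hden
  have hlim2 := (hN 1).div (hN 2) hden
  refine Tendsto.congr' ?_ (hlim1.prodMk_nhds hlim2)
  filter_upwards [hcne] with k hk
  show ((Nf 0 / Nf 2) k, (Nf 1 / Nf 2) k) = _
  simp only [Pi.div_apply]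
  rw [hkey 0 k hk, hkey 1 k hk]

lemma eq_of_exps {G : Type*} [Group G] (s t f : G) {e1 e2 e3 e1' e2' e3' : ℤ}
    (h1 : e1 = e1') (h2 : e2 = e2') (h3 : e3 = e3') :
    s ^ e1 * (t ^ e2 * f ^ e3) = s ^ e1' * (t ^ e2' * f ^ e3') := by
  rw [h1, h2, h3]

theorem stmt10 (F : (ℝ × ℝ) ≃ₜ (ℝ × ℝ)) (hS : commuting F S2) (hT : commuting F T2)
    (L M : Matrix (Fin 3) (Fin 3) ℤ) (hdet : L.det = 1) (hLM : L * M = 1) (hML : M * L = 1)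
    (hdisj : ∀ w ∈ rotSet F S2 T2,
      (L 2 0 : ℝ) * w.1 + (L 2 1 : ℝ) * w.2 + (L 2 2 : ℝ) ≠ 0)
    (U V G : (ℝ × ℝ) ≃ₜ (ℝ × ℝ))
    (hU : U = mk2 F (M 0 0) (M 1 0) (M 2 0)) (hV : V = mk2 F (M 0 1) (M 1 1) (M 2 1))
    (hG : G = mk2 F (-(M 0 2)) (-(M 1 2)) (-(M 2 2))) :
    rotSet G U V = lhatZ L '' rotSet F S2 T2 := by
  have hst : Commute S2.toEquiv T2.toEquiv := commute_S2T2
  have hsf : Commute S2.toEquiv F.toEquiv := (commute_toEquiv hS).symm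
  have htf : Commute T2.toEquiv F.toEquiv := (commute_toEquiv hT).symm
  -- matrix entry identities
  have hMLe : ∀ i k : Fin 3, M i 0 * L 0 k + M i 1 * L 1 k + M i 2 * L 2 k
      = if i = k then 1 else 0 := by
    intro i k
    have h := congrFun (congrFun hML i) k
    simpa [Matrix.mul_apply, Fin.sum_univ_three, Matrix.one_apply] using h
  have hLMe : ∀ i k : Fin 3, L i 0 * M 0 k + L i 1 * M 1 k + L i 2 * M 2 k
      = if i = k then 1 else 0 := by
    intro i k
    have h := congrFun (congrFun hLM i) k
    simpa [Matrix.mul_apply, Fin.sum_univ_three, Matrix.one_apply] using h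
  have hMLrow : ∀ v : ℤ × ℤ × ℤ, row3 M (row3 L v) = v := by
    rintro ⟨m, n, p⟩
    have e00 : M 0 0 * L 0 0 + M 0 1 * L 1 0 + M 0 2 * L 2 0 = 1 := by simpa using hMLe 0 0
    have e01 : M 0 0 * L 0 1 + M 0 1 * L 1 1 + M 0 2 * L 2 1 = 0 := by simpa using hMLe 0 1
    have e02 : M 0 0 * L 0 2 + M 0 1 * L 1 2 + M 0 2 * L 2 2 = 0 := by simpa using hMLe 0 2
    have e10 : M 1 0 * L 0 0 + M 1 1 * L 1 0 + M 1 2 * L 2 0 = 0 := by simpa using hMLe 1 0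
    have e11 : M 1 0 * L 0 1 + M 1 1 * L 1 1 + M 1 2 * L 2 1 = 1 := by simpa using hMLe 1 1
    have e12 : M 1 0 * L 0 2 + M 1 1 * L 1 2 + M 1 2 * L 2 2 = 0 := by simpa using hMLe 1 2
    have e20 : M 2 0 * L 0 0 + M 2 1 * L 1 0 + M 2 2 * L 2 0 = 0 := by simpa using hMLe 2 0
    have e21 : M 2 0 * L 0 1 + M 2 1 * L 1 1 + M 2 2 * L 2 1 = 0 := by simpa using hMLe 2 1
    have e22 : M 2 0 * L 0 2 + M 2 1 * L 1 2 + M 2 2 * L 2 2 = 1 := by simpa using hMLe 2 2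
    simp only [row3, Prod.mk.injEq]
    refine ⟨?_, ?_, ?_⟩
    · linear_combination m * e00 + n * e01 + p * e02
    · linear_combination m * e10 + n * e11 + p * e12
    · linear_combination m * e20 + n * e21 + p * e22
  have hLMrow : ∀ v : ℤ × ℤ × ℤ, row3 L (row3 M v) = v := by
    rintro ⟨m, n, p⟩
    have e00 : L 0 0 * M 0 0 + L 0 1 * M 1 0 + L 0 2 * M 2 0 = 1 := by simpa using hLMe 0 0
    have e01 : L 0 0 * M 0 1 + L 0 1 * M 1 1 + L 0 2 * M 2 1 = 0 := by simpa using hLMe 0 1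
    have e02 : L 0 0 * M 0 2 + L 0 1 * M 1 2 + L 0 2 * M 2 2 = 0 := by simpa using hLMe 0 2
    have e10 : L 1 0 * M 0 0 + L 1 1 * M 1 0 + L 1 2 * M 2 0 = 0 := by simpa using hLMe 1 0
    have e11 : L 1 0 * M 0 1 + L 1 1 * M 1 1 + L 1 2 * M 2 1 = 1 := by simpa using hLMe 1 1
    have e12 : L 1 0 * M 0 2 + L 1 1 * M 1 2 + L 1 2 * M 2 2 = 0 := by simpa using hLMe 1 2
    have e20 : L 2 0 * M 0 0 + L 2 1 * M 1 0 + L 2 2 * M 2 0 = 0 := by simpa using hLMe 2 0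
    have e21 : L 2 0 * M 0 1 + L 2 1 * M 1 1 + L 2 2 * M 2 1 = 0 := by simpa using hLMe 2 1
    have e22 : L 2 0 * M 0 2 + L 2 1 * M 1 2 + L 2 2 * M 2 2 = 1 := by simpa using hLMe 2 2
    simp only [row3, Prod.mk.injEq]
    refine ⟨?_, ?_, ?_⟩
    · linear_combination m * e00 + n * e01 + p * e02
    · linear_combination m * e10 + n * e11 + p * e12
    · linear_combination m * e20 + n * e21 + p * e22
  -- act equality
  have hUe : U.toEquiv = S2.toEquiv ^ (M 0 0) * (T2.toEquiv ^ (M 1 0) * F.toEquiv ^ (-(M 2 0))) := by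
    rw [hU]; exact mk2_toEquiv F _ _ _
  have hVe : V.toEquiv = S2.toEquiv ^ (M 0 1) * (T2.toEquiv ^ (M 1 1) * F.toEquiv ^ (-(M 2 1))) := by
    rw [hV]; exact mk2_toEquiv F _ _ _
  have hGe : G.toEquiv
      = S2.toEquiv ^ (-(M 0 2)) * (T2.toEquiv ^ (-(M 1 2)) * F.toEquiv ^ (-(-(M 2 2)))) := by
    rw [hG]; exact mk2_toEquiv F _ _ _
  have act_toE : ∀ v : ℤ × ℤ × ℤ, (act U V G v.1 v.2.1 v.2.2).toEquiv
      = (act S2 T2 F (row3 M v).1 (row3 M v).2.1 (row3 M v).2.2).toEquiv := by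
    rintro ⟨m, n, p⟩
    rw [act_toEquiv, act_toEquiv, hUe, hVe, hGe,
        prod_zpow hst hsf htf, prod_zpow hst hsf htf, prod_zpow hst hsf htf,
        prod_mul hst hsf htf, prod_mul hst hsf htf]
    simp only [row3]
    exact eq_of_exps _ _ _ (by ring) (by ring) (by ring)
  have act_img : ∀ (v : ℤ × ℤ × ℤ) (K : Set (ℝ × ℝ)),
      (act U V G v.1 v.2.1 v.2.2) '' K
        = (act S2 T2 F (row3 M v).1 (row3 M v).2.1 (row3 M v).2.2) '' K := by
    intro v K
    have hcoe : ⇑(act U V G v.1 v.2.1 v.2.2)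
        = ⇑(act S2 T2 F (row3 M v).1 (row3 M v).2.1 (row3 M v).2.2) := by
      funext x
      have h2 := congrArg (fun e : Equiv.Perm (ℝ × ℝ) => e x) (act_toE v)
      simpa using h2
    rw [hcoe]
  -- tendsInfty transfers
  obtain ⟨cL, hcLpos, hcL⟩ := row3_bound L
  obtain ⟨cM, hcMpos, hcM⟩ := row3_bound M
  have hTI_M : ∀ s : ℕ → ℤ × ℤ × ℤ, tendsInfty s → tendsInfty (fun k => row3 M (s k)) := by
    intro s hs
    have hs' : Tendsto (fun k => sabs (s k)) atTop atTop := hs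
    apply tendsto_int_of_mul cL hcLpos
    apply tendsto_atTop_mono _ hs'
    intro k
    have h3 := hcL (row3 M (s k))
    rw [hLMrow (s k)] at h3
    exact h3
  have hTI_L : ∀ s : ℕ → ℤ × ℤ × ℤ, tendsInfty s → tendsInfty (fun k => row3 L (s k)) := by
    intro s hs
    have hs' : Tendsto (fun k => sabs (s k)) atTop atTop := hs
    apply tendsto_int_of_mul cM hcMpos
    apply tendsto_atTop_mono _ hs'
    intro k
    have h3 := hcM (row3 L (s k))
    rw [hMLrow (s k)] at h3
    exact h3
  -- |c| → ∞ helper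
  have habs_c : ∀ (s : ℕ → ℤ × ℤ × ℤ) (Dd C : ℝ), 0 ≤ Dd → 0 ≤ C →
      (∀ k, (|((s k).1 : ℝ)| + |((s k).2.1 : ℝ)|) ≤ |((s k).2.2 : ℝ)| * Dd + C) →
      tendsInfty s → Tendsto (fun k => |((s k).2.2 : ℝ)|) atTop atTop := by
    intro s Dd C hDd hC hb hs
    have hsR : Tendsto (fun k => ((|(s k).1| + |(s k).2.1| + |(s k).2.2| : ℤ) : ℝ)) atTop atTop :=
      tendsto_intCast_atTop_atTop.comp hs
    apply tendsto_real_aux _ _ (Dd + 1) C (by linarith) (fun k => abs_nonneg _) hsR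
    intro k
    have h4 := hb k
    push_cast
    nlinarith [abs_nonneg ((((s k).2.2 : ℤ) : ℝ))]
  ext w
  constructor
  · rintro ⟨K, hK, s, hinter, hTI, hlim⟩
    set t : ℕ → ℤ × ℤ × ℤ := fun k => row3 M (s k) with ht
    have hinterF : ∀ k, ((act S2 T2 F (t k).1 (t k).2.1 (t k).2.2) '' K ∩ K).Nonempty := by
      intro k
      rw [← act_img (s k) K]
      exact hinter k
    have hTIt : tendsInfty t := hTI_M s hTI
    obtain ⟨Dd, C, hDd, hC, hbd⟩ := inter_bound F hS hT K hK
    have hbdt : ∀ k, (|((t k).1 : ℝ)| + |((t k).2.1 : ℝ)|) ≤ |((t k).2.2 : ℝ)| * Dd + C :=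
      fun k => hbd (t k).1 (t k).2.1 (t k).2.2 (hinterF k)
    have hcinf : Tendsto (fun k => |((t k).2.2 : ℝ)|) atTop atTop :=
      habs_c t Dd C hDd hC hbdt hTIt
    have hrb : ∀ k, ((((t k).1 : ℝ) / ((t k).2.2 : ℝ), ((t k).2.1 : ℝ) / ((t k).2.2 : ℝ)) : ℝ × ℝ)
        ∈ Metric.closedBall (0 : ℝ × ℝ) (Dd + C) := by
      intro k
      rw [Metric.mem_closedBall, dist_zero_right]
      by_cases hcc : ((t k).2.2 : ℝ) = 0
      · rw [hcc]
        simp only [div_zero]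
        rw [Prod.norm_def]
        simp
        positivity
      · have hc1 : (1:ℝ) ≤ |((t k).2.2 : ℝ)| := by
          have : (t k).2.2 ≠ 0 := fun h0 => hcc (by rw [h0]; simp)
          have h5 := Int.one_le_abs this
          calc (1:ℝ) ≤ ((|(t k).2.2| : ℤ) : ℝ) := by exact_mod_cast h5
            _ = |((t k).2.2 : ℝ)| := by push_cast; ring
        have hpos : (0:ℝ) < |((t k).2.2 : ℝ)| := by linarith
        have h1 : |((t k).1 : ℝ) / ((t k).2.2 : ℝ)| ≤ Dd + C := by
          rw [abs_div, div_le_iff₀ hpos]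
          nlinarith [hbdt k, abs_nonneg (((t k).2.1 : ℝ))]
        have h2 : |((t k).2.1 : ℝ) / ((t k).2.2 : ℝ)| ≤ Dd + C := by
          rw [abs_div, div_le_iff₀ hpos]
          nlinarith [hbdt k, abs_nonneg (((t k).1 : ℝ))]
        rw [Prod.norm_def]
        exact max_le (by simpa [Real.norm_eq_abs, abs_div] using h1) (by simpa [Real.norm_eq_abs, abs_div] using h2)
    obtain ⟨w', _, φ, hφ, hconv⟩ :=
      tendsto_subseq_of_bounded (Metric.isBounded_closedBall) hrb
    have hw'mem : w' ∈ rotSet F S2 T2 := by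
      refine ⟨K, hK, fun k => t (φ k), fun k => hinterF (φ k), ?_, ?_⟩
      · exact hTIt.comp hφ.tendsto_atTop
      · exact hconv
    have hden := hdisj w' hw'mem
    have hv1 : ∀ k, L 0 0 * (t k).1 + L 0 1 * (t k).2.1 + L 0 2 * (t k).2.2 = (s k).1 :=
      fun k => congrArg Prod.fst (hLMrow (s k))
    have hv2 : ∀ k, L 1 0 * (t k).1 + L 1 1 * (t k).2.1 + L 1 2 * (t k).2.2 = (s k).2.1 :=
      fun k => congrArg (fun v => v.2.1) (hLMrow (s k))
    have hv3 : ∀ k, L 2 0 * (t k).1 + L 2 1 * (t k).2.1 + L 2 2 * (t k).2.2 = (s k).2.2 :=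
      fun k => congrArg (fun v => v.2.2) (hLMrow (s k))
    have hlimφ : Tendsto (fun k => (((s (φ k)).1 : ℝ) / ((s (φ k)).2.2 : ℝ),
        ((s (φ k)).2.1 : ℝ) / ((s (φ k)).2.2 : ℝ))) atTop (nhds (lhatZ L w')) := by
      have h6 := ratio_lemma L (fun k => (t (φ k)).1) (fun k => (t (φ k)).2.1)
        (fun k => (t (φ k)).2.2) w' hconv (hcinf.comp hφ.tendsto_atTop) hden
      refine Tendsto.congr (fun k => ?_) h6
      rw [hv1 (φ k), hv2 (φ k), hv3 (φ k)]
    have hlimφ2 : Tendsto (fun k => (((s (φ k)).1 : ℝ) / ((s (φ k)).2.2 : ℝ),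
        ((s (φ k)).2.1 : ℝ) / ((s (φ k)).2.2 : ℝ))) atTop (nhds w) :=
      hlim.comp hφ.tendsto_atTop
    exact ⟨w', hw'mem, tendsto_nhds_unique hlimφ hlimφ2⟩
  · rintro ⟨w', hw'mem, rfl⟩
    obtain ⟨K, hK, s, hinter, hTI, hlim⟩ := hw'mem
    refine ⟨K, hK, fun k => row3 L (s k), ?_, ?_, ?_⟩
    · intro k
      have himg := act_img (row3 L (s k)) K
      rw [hMLrow (s k)] at himg
      rw [himg]
      exact hinter k
    · exact hTI_L s hTI
    · obtain ⟨Dd, C, hDd, hC, hbd⟩ := inter_bound F hS hT K hK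
      have hcinf := habs_c s Dd C hDd hC (fun k => hbd _ _ _ (hinter k)) hTI
      have hden := hdisj w' ⟨K, hK, s, hinter, hTI, hlim⟩
      exact ratio_lemma L (fun k => (s k).1) (fun k => (s k).2.1) (fun k => (s k).2.2)
        w' hlim hcinf hden
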